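/- Let f be a continuous probability density on [0, ∞) that is strictly positive on (0, ∞), with cdf F and finite mean E[w]. Let α > 0, β > 0, θ > 0 satisfy θ > √(2βE[w]/α), i.e., βE[w] < αθ²/2. Define X_B(u) = (∫ᵤ^∞ (1 − F(w))dw)/(1 − F(u)) + (∫₀ᵘ F(w)dw)/F(u) for u > 0 and X_B(0) = E[w]. Then there exists u ∈ [0, αθ] with β·X_B(u) = (αθ − u)²/(2α). (This is the fixed-point condition whose solution u^MFE characterizes a mean field equilibrium under type-B feedback.) -/

import Mathlib

open MeasureTheory Filter Set Topology

/-- If θ > √(2βE[w]/α) (i.e. βE[w] < αθ²/2), then there is a cutoff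
u ∈ [0, αθ] with β·X_B(u) = (αθ − u)²/(2α), where X_B(0) = E[w] and for u > 0,
X_B(u) = (∫ᵤ^∞ (1 − F))/(1 − F(u)) + (∫₀ᵘ F)/F(u). -/
theorem typeB_mfe_exists (f : ℝ → ℝ) (hcont : ContinuousOn f (Set.Ici 0))
    (hnn : ∀ w, 0 ≤ f w) (hsupp : ∀ w, w < 0 → f w = 0)
    (hpos : ∀ w, 0 < w → 0 < f w)
    (hint : IntegrableOn f (Set.Ici 0))
    (htotal : (∫ w in Set.Ici (0:ℝ), f w) = 1)
    (hmean : IntegrableOn (fun w => w * f w) (Set.Ici 0))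
    (F : ℝ → ℝ) (hF : ∀ u, F u = ∫ w in (0:ℝ)..u, f w)
    (α β θ : ℝ) (hα : 0 < α) (hβ : 0 < β) (hθ : 0 < θ)
    (hcond : β * (∫ w in Set.Ici (0:ℝ), w * f w) < α * θ ^ 2 / 2)
    (XB : ℝ → ℝ)
    (hXB0 : XB 0 = ∫ w in Set.Ici (0:ℝ), w * f w)
    (hXB : ∀ u, 0 < u →
      XB u = (∫ w in Set.Ici u, (1 - F w)) / (1 - F u) + (∫ w in (0:ℝ)..u, F w) / F u) :
    ∃ u ∈ Set.Icc (0:ℝ) (α * θ), β * XB u = (α * θ - u) ^ 2 / (2 * α) := by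
  set E : ℝ := ∫ w in Set.Ici (0:ℝ), w * f w with hEdef
  -- f is globally integrable
  have hfeq : f = (Set.Ici (0:ℝ)).indicator f := by
    funext w
    by_cases h : (0:ℝ) ≤ w
    · simp [Set.indicator_of_mem, h]
    · simp [Set.indicator_of_notMem, h, hsupp w (lt_of_not_ge h)]
  have hfint : Integrable f := by
    rw [hfeq]; rwa [integrable_indicator_iff measurableSet_Ici]
  have hfii : ∀ a b : ℝ, IntervalIntegrable f volume a b := fun a b =>
    hfint.intervalIntegrable
  -- same for w * f w
  have hwfeq : (fun w => w * f w) = (Set.Ici (0:ℝ)).indicator (fun w => w * f w) := by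
    funext w
    by_cases h : (0:ℝ) ≤ w
    · simp [Set.indicator_of_mem, h]
    · simp [Set.indicator_of_notMem, h, hsupp w (lt_of_not_ge h)]
  have hwfint : Integrable (fun w => w * f w) := by
    rw [hwfeq]; rwa [integrable_indicator_iff measurableSet_Ici]
  -- F basic facts
  have hFcont : Continuous F := by
    have : F = fun u => ∫ w in (0:ℝ)..u, f w := funext hF
    rw [this]; exact intervalIntegral.continuous_primitive hfii 0
  have hF0 : F 0 = 0 := by rw [hF]; simp
  have hFmono : Monotone F := by
    intro a b hab
    have hsum := intervalIntegral.integral_add_adjacent_intervals (hfii 0 a) (hfii a b)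
    have hnn' : 0 ≤ ∫ w in a..b, f w :=
      intervalIntegral.integral_nonneg hab (fun x _ => hnn x)
    rw [hF a, hF b, ← hsum]; linarith
  have hFnonneg : ∀ u, 0 ≤ u → 0 ≤ F u := by
    intro u hu
    rw [← hF0]; exact hFmono hu
  have hFpos : ∀ u, 0 < u → 0 < F u := by
    intro u hu
    rw [hF]
    exact intervalIntegral.intervalIntegral_pos_of_pos_on (hfii 0 u)
      (fun x hx => hpos x hx.1) hu
  -- tail representation
  have htail : ∀ u : ℝ, 0 ≤ u → 1 - F u = ∫ w in Set.Ioi u, f w := by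
    intro u hu
    have hsplit : ∫ w in Set.Ioi (0:ℝ), f w
        = (∫ w in Set.Ioc 0 u, f w) + ∫ w in Set.Ioi u, f w := by
      rw [← setIntegral_union (Set.Ioc_disjoint_Ioi le_rfl) measurableSet_Ioi
        hfint.integrableOn hfint.integrableOn, Set.Ioc_union_Ioi_eq_Ioi hu]
    have h1 : ∫ w in Set.Ioi (0:ℝ), f w = 1 := by
      rw [← integral_Ici_eq_integral_Ioi]; exact htotal
    have h2 : F u = ∫ w in Set.Ioc 0 u, f w := by
      rw [hF, intervalIntegral.integral_of_le hu]
    rw [h2]; linarith [hsplit, h1]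
  have hGpos : ∀ u : ℝ, 0 ≤ u → 0 < 1 - F u := by
    intro u hu
    rw [htail u hu]
    have h1 : 0 < ∫ w in u..(u + 1), f w :=
      intervalIntegral.intervalIntegral_pos_of_pos_on (hfii u (u + 1))
        (fun x hx => hpos x (lt_of_le_of_lt hu hx.1)) (by linarith)
    have h2 : ∫ w in u..(u + 1), f w = ∫ w in Set.Ioc u (u + 1), f w :=
      intervalIntegral.integral_of_le (by linarith)
    calc (0:ℝ) < ∫ w in Set.Ioc u (u + 1), f w := by rw [← h2]; exact h1
      _ ≤ ∫ w in Set.Ioi u, f w := by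
          apply setIntegral_mono_set hfint.integrableOn
            (ae_of_all _ fun x => hnn x)
            (HasSubset.Subset.eventuallyLE Set.Ioc_subset_Ioi_self)
  -- derivative facts
  have hFderiv : ∀ x : ℝ, 0 < x → HasDerivAt F (f x) x := by
    intro x hx
    have hca : ContinuousAt f x := hcont.continuousAt (Ici_mem_nhds hx)
    have := intervalIntegral.integral_hasDerivAt_right (hfii 0 x)
      (hfint.aestronglyMeasurable.stronglyMeasurableAtFilter) hca
    have hFe : F = fun u => ∫ w in (0:ℝ)..u, f w := funext hF
    rw [hFe]; exact this
  set B : ℝ → ℝ := fun b => ∫ w in (0:ℝ)..b, w * f w with hBdef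
  have hBderiv : ∀ x : ℝ, 0 < x → HasDerivAt B (x * f x) x := by
    intro x hx
    have hca : ContinuousAt (fun w => w * f w) x :=
      continuousAt_id.mul (hcont.continuousAt (Ici_mem_nhds hx))
    exact intervalIntegral.integral_hasDerivAt_right hwfint.intervalIntegrable
      (hwfint.aestronglyMeasurable.stronglyMeasurableAtFilter) hca
  have hBcont : Continuous B :=
    intervalIntegral.continuous_primitive (fun a b => hwfint.intervalIntegrable) 0
  have hB0 : B 0 = 0 := by simp [hBdef]
  have hBnonneg : ∀ b : ℝ, 0 ≤ b → 0 ≤ B b := fun b hb =>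
    intervalIntegral.integral_nonneg hb (fun x hx => mul_nonneg hx.1 (hnn x))
  -- integration by parts identity
  have hIBP : ∀ b : ℝ, 0 ≤ b → (∫ w in (0:ℝ)..b, (1 - F w)) = b * (1 - F b) + B b := by
    intro b hb
    rcases eq_or_lt_of_le hb with rfl | hb'
    · simp [hB0]
    · have key := intervalIntegral.integral_eq_sub_of_hasDerivAt_of_le hb
        (f := fun u => u * (1 - F u) + B u) (f' := fun u => 1 - F u)
        (by fun_prop)
        (by
          intro x hx
          have h1 : HasDerivAt (fun u : ℝ => u * (1 - F u))
              (1 * (1 - F x) + x * (0 - f x)) x :=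
            (hasDerivAt_id x).mul ((hasDerivAt_const x (1:ℝ)).sub (hFderiv x hx.1))
          have h2 := (h1.add (hBderiv x hx.1))
          convert h2 using 1; rfl; ring)
        ((continuous_const.sub hFcont).intervalIntegrable 0 b)
      simp only [key, hB0, hF0]; ring
  -- bound b * (1 - F b) ≤ E - B b
  have hEsplit : ∀ b : ℝ, 0 ≤ b → E = B b + ∫ w in Set.Ioi b, w * f w := by
    intro b hb
    have h1 : E = ∫ w in Set.Ioi (0:ℝ), w * f w := integral_Ici_eq_integral_Ioi
    have hsplit : ∫ w in Set.Ioi (0:ℝ), w * f w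
        = (∫ w in Set.Ioc 0 b, w * f w) + ∫ w in Set.Ioi b, w * f w := by
      rw [← setIntegral_union (Set.Ioc_disjoint_Ioi le_rfl) measurableSet_Ioi
        hwfint.integrableOn hwfint.integrableOn, Set.Ioc_union_Ioi_eq_Ioi hb]
    have h2 : B b = ∫ w in Set.Ioc 0 b, w * f w := intervalIntegral.integral_of_le hb
    rw [h1, hsplit, h2]
  have hbound : ∀ b : ℝ, 0 ≤ b → b * (1 - F b) ≤ E - B b := by
    intro b hb
    have h1 : b * (1 - F b) = ∫ w in Set.Ioi b, b * f w := by
      rw [htail b hb, ← integral_const_mul]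
    have h2 : (∫ w in Set.Ioi b, b * f w) ≤ ∫ w in Set.Ioi b, w * f w := by
      apply setIntegral_mono_on ((hfint.integrableOn).const_mul b)
        hwfint.integrableOn measurableSet_Ioi
      intro x hx
      exact mul_le_mul_of_nonneg_right (le_of_lt hx) (hnn x)
    have h3 := hEsplit b hb
    linarith
  -- limits
  have hBtend : Tendsto B atTop (𝓝 E) := by
    have h1 : E = ∫ w in Set.Ioi (0:ℝ), w * f w := integral_Ici_eq_integral_Ioi
    rw [h1]
    exact intervalIntegral_tendsto_integral_Ioi 0 hwfint.integrableOn tendsto_id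
  have hbG0 : Tendsto (fun b => b * (1 - F b)) atTop (𝓝 0) := by
    have hupper : Tendsto (fun b => E - B b) atTop (𝓝 0) := by
      have := tendsto_const_nhds (x := E) (f := atTop (α := ℝ)) |>.sub hBtend
      simpa using this
    apply tendsto_of_tendsto_of_tendsto_of_le_of_le' tendsto_const_nhds hupper
    · filter_upwards [eventually_ge_atTop (0:ℝ)] with b hb
      exact mul_nonneg hb (le_of_lt (hGpos b hb))
    · filter_upwards [eventually_ge_atTop (0:ℝ)] with b hb
      exact hbound b hb
  have hGF : Tendsto (fun b => ∫ w in (0:ℝ)..b, (1 - F w)) atTop (𝓝 E) := by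
    have : Tendsto (fun b => b * (1 - F b) + B b) atTop (𝓝 (0 + E)) :=
      hbG0.add hBtend
    rw [zero_add] at this
    apply this.congr'
    filter_upwards [eventually_ge_atTop (0:ℝ)] with b hb
    exact (hIBP b hb).symm
  -- G is integrable on Ioi 0
  have hGcont : Continuous (fun w => 1 - F w) := continuous_const.sub hFcont
  have hGint : IntegrableOn (fun w => 1 - F w) (Set.Ioi 0) := by
    apply integrableOn_Ioi_of_intervalIntegral_norm_bounded E 0
      (fun b : ℝ => hGcont.integrableOn_Ioc) tendsto_id
    filter_upwards [eventually_ge_atTop (0:ℝ)] with b hb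
    have heq : (∫ w in (0:ℝ)..b, ‖1 - F w‖) = ∫ w in (0:ℝ)..b, (1 - F w) := by
      apply intervalIntegral.integral_congr
      intro x hx
      rw [Set.uIcc_of_le hb] at hx
      exact Real.norm_of_nonneg (le_of_lt (hGpos x hx.1))
    simp only [id]
    rw [heq, hIBP b hb]
    linarith [hbound b hb, hBnonneg b hb]
  have hGIoi : (∫ w in Set.Ioi (0:ℝ), (1 - F w)) = E :=
    tendsto_nhds_unique (intervalIntegral_tendsto_integral_Ioi 0 hGint tendsto_id) hGF
  -- N u = E - ∫_0^u G
  have hNsplit : ∀ u : ℝ, 0 ≤ u →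
      (∫ w in Set.Ici u, (1 - F w)) = E - ∫ w in (0:ℝ)..u, (1 - F w) := by
    intro u hu
    have hsplit : ∫ w in Set.Ioi (0:ℝ), (1 - F w)
        = (∫ w in Set.Ioc 0 u, (1 - F w)) + ∫ w in Set.Ioi u, (1 - F w) := by
      rw [← setIntegral_union (Set.Ioc_disjoint_Ioi le_rfl) measurableSet_Ioi
        (hGint.mono_set Set.Ioc_subset_Ioi_self) (hGint.mono_set (Set.Ioi_subset_Ioi hu)),
        Set.Ioc_union_Ioi_eq_Ioi hu]
    have h1 : (∫ w in Set.Ici u, (1 - F w)) = ∫ w in Set.Ioi u, (1 - F w) :=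
      integral_Ici_eq_integral_Ioi
    have h2 : (∫ w in (0:ℝ)..u, (1 - F w)) = ∫ w in Set.Ioc 0 u, (1 - F w) :=
      intervalIntegral.integral_of_le hu
    rw [h1, h2]; linarith [hsplit, hGIoi]
  have hNpos : ∀ u : ℝ, 0 ≤ u → 0 < ∫ w in Set.Ici u, (1 - F w) := by
    intro u hu
    rw [integral_Ici_eq_integral_Ioi]
    have h1 : 0 < ∫ w in u..(u + 1), (1 - F w) :=
      intervalIntegral.intervalIntegral_pos_of_pos_on (hGcont.intervalIntegrable u (u+1))
        (fun x hx => hGpos x (le_trans hu (le_of_lt hx.1))) (by linarith)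
    have h2 : ∫ w in u..(u + 1), (1 - F w) = ∫ w in Set.Ioc u (u + 1), (1 - F w) :=
      intervalIntegral.integral_of_le (by linarith)
    calc (0:ℝ) < ∫ w in Set.Ioc u (u + 1), (1 - F w) := by rw [← h2]; exact h1
      _ ≤ ∫ w in Set.Ioi u, (1 - F w) := by
          apply setIntegral_mono_set (hGint.mono_set (Set.Ioi_subset_Ioi hu))
            (ae_restrict_of_forall_mem measurableSet_Ioi
              (fun x hx => le_of_lt (hGpos x (le_trans hu (le_of_lt hx)))))
            (HasSubset.Subset.eventuallyLE Set.Ioc_subset_Ioi_self)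
  -- the auxiliary function
  set q : ℝ → ℝ := fun u => (α * θ - u) ^ 2 / (2 * α) with hqdef
  set M : ℝ → ℝ := fun u => ∫ w in (0:ℝ)..u, F w with hMdef
  set h : ℝ → ℝ := fun u =>
    β * ((E - ∫ w in (0:ℝ)..u, (1 - F w)) / (1 - F u) + M u / F u) - q u with hhdef
  have hMcont : Continuous M :=
    intervalIntegral.continuous_primitive (fun a b => hFcont.intervalIntegrable a b) 0
  have hM0 : M 0 = 0 := by simp [hMdef]
  have hMbound : ∀ u : ℝ, 0 < u → M u / F u ≤ u := by
    intro u hu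
    have h1 : M u ≤ u * F u := by
      have := intervalIntegral.integral_mono_on (le_of_lt hu)
        (hFcont.intervalIntegrable 0 u)
        (intervalIntegrable_const (μ := MeasureTheory.volume) (c := F u))
        (fun x hx => hFmono hx.2)
      simpa [hMdef] using this
    rw [div_le_iff₀ (hFpos u hu)]
    exact h1
  have hMdivnn : ∀ u : ℝ, 0 < u → 0 ≤ M u / F u := by
    intro u hu
    apply div_nonneg _ (le_of_lt (hFpos u hu))
    exact intervalIntegral.integral_nonneg (le_of_lt hu) (fun x hx => hFnonneg x hx.1)
  -- continuity of h on Icc 0 (α θ)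
  have hαθ : 0 < α * θ := mul_pos hα hθ
  have hIcont : Continuous (fun u => ∫ w in (0:ℝ)..u, (1 - F w)) :=
    intervalIntegral.continuous_primitive (fun a b => hGcont.intervalIntegrable a b) 0
  have hhcont : ContinuousOn h (Set.Icc 0 (α * θ)) := by
    intro x hx
    rcases eq_or_lt_of_le hx.1 with rfl | hx'
    · -- continuity at 0 within
      have hA : ContinuousAt (fun u => β * ((E - ∫ w in (0:ℝ)..u, (1 - F w)) / (1 - F u)) - q u) 0 := by
        apply ContinuousAt.sub
        · apply ContinuousAt.mul continuousAt_const
          apply ContinuousAt.div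
          · exact (continuousAt_const.sub hIcont.continuousAt)
          · exact (continuousAt_const.sub hFcont.continuousAt)
          · rw [hF0]; norm_num
        · apply Continuous.continuousAt; fun_prop
      have hR : Tendsto (fun u => M u / F u) (𝓝[Set.Icc 0 (α * θ)] 0) (𝓝 0) := by
        apply tendsto_of_tendsto_of_tendsto_of_le_of_le' tendsto_const_nhds
          (g := fun _ => (0:ℝ)) (h := fun u => u)
        · exact (continuousAt_id.continuousWithinAt).tendsto
        · apply eventually_nhdsWithin_of_forall
          intro u hu
          rcases eq_or_lt_of_le hu.1 with rfl | hu'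
          · simp [hM0, hF0]
          · exact hMdivnn u hu'
        · apply eventually_nhdsWithin_of_forall
          intro u hu
          rcases eq_or_lt_of_le hu.1 with rfl | hu'
          · simp [hM0, hF0]
          · exact hMbound u hu'
      have h0val : h 0 = β * ((E - 0) / (1 - F 0)) - q 0 := by
        simp [hhdef, hM0, hF0]
      unfold ContinuousWithinAt
      have hcomb : Tendsto h (𝓝[Set.Icc 0 (α * θ)] 0)
          (𝓝 ((β * ((E - 0) / (1 - F 0)) - q 0) + β * 0)) := by
        have hA' : Tendsto (fun u => β * ((E - ∫ w in (0:ℝ)..u, (1 - F w)) / (1 - F u)) - q u)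
            (𝓝[Set.Icc 0 (α * θ)] 0) (𝓝 (β * ((E - ∫ w in (0:ℝ)..(0:ℝ), (1 - F w)) / (1 - F 0)) - q 0)) :=
          hA.continuousWithinAt.tendsto
        have := hA'.add ((tendsto_const_nhds (x := β)).mul hR)
        simp only [intervalIntegral.integral_same] at this
        apply this.congr
        intro u
        simp only [hhdef]
        ring
      rw [h0val]
      convert hcomb using 2
      ring
    · -- continuity at x > 0
      apply ContinuousAt.continuousWithinAt
      apply ContinuousAt.sub
      · apply ContinuousAt.mul continuousAt_const
        apply ContinuousAt.add
        · apply ContinuousAt.div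
          · exact continuousAt_const.sub hIcont.continuousAt
          · exact continuousAt_const.sub hFcont.continuousAt
          · exact ne_of_gt (hGpos x (le_of_lt hx'))
        · exact ContinuousAt.div hMcont.continuousAt hFcont.continuousAt
            (ne_of_gt (hFpos x hx'))
      · apply Continuous.continuousAt; fun_prop
  -- endpoint values
  have hq0 : q 0 = α * θ ^ 2 / 2 := by
    simp only [hqdef]
    field_simp
    ring
  have hh0 : h 0 < 0 := by
    have : h 0 = β * E - q 0 := by
      simp [hhdef, hM0, hF0]
    rw [this, hq0]
    linarith
  have hhT : 0 ≤ h (α * θ) := by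
    have hqT : q (α * θ) = 0 := by simp [hqdef]
    have hN := hNpos (α * θ) (le_of_lt hαθ)
    rw [hNsplit (α * θ) (le_of_lt hαθ)] at hN
    have h1 : 0 < (E - ∫ w in (0:ℝ)..(α * θ), (1 - F w)) / (1 - F (α * θ)) :=
      div_pos hN (hGpos _ (le_of_lt hαθ))
    have h2 : 0 ≤ M (α * θ) / F (α * θ) := hMdivnn _ hαθ
    have : h (α * θ) = β * ((E - ∫ w in (0:ℝ)..(α * θ), (1 - F w)) / (1 - F (α * θ))
        + M (α * θ) / F (α * θ)) := by
      simp [hhdef, hqT]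
    rw [this]
    positivity
  -- IVT
  have hmem : (0:ℝ) ∈ Set.Icc (h 0) (h (α * θ)) := ⟨le_of_lt hh0, hhT⟩
  obtain ⟨c, hcmem, hc0⟩ := intermediate_value_Icc (le_of_lt hαθ) hhcont hmem
  have hcpos : 0 < c := by
    rcases eq_or_lt_of_le hcmem.1 with rfl | h'
    · exfalso; rw [hc0] at hh0; exact lt_irrefl 0 hh0
    · exact h'
  refine ⟨c, hcmem, ?_⟩
  rw [hXB c hcpos, hNsplit c (le_of_lt hcpos)]
  have : h c = 0 := hc0
  simp only [hhdef, hqdef, hMdef] at this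
  linarith
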